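/- Given a sequence of Pauli operators O⃗ on n qubits, there exist a sequence S⃗ of Pauli operators and a set G̃ of Pauli operators such that: (1) all operators in S⃗ commute with each other and with all operators in G̃; (2) each operator in G̃ is a member of a conjugal pair in relation to {S⃗ᵢ} ∪ G̃; and (3) the group generated by {S⃗ᵢ} ∪ G̃ equals the group generated by the elements of O⃗. -/

import Mathlib

/-- Pauli operators on `n` qubits modulo phases, encoded symplectically:
each qubit carries an (X-part, Z-part) pair in `ZMod 2`. Multiplication is addition. -/
abbrev Pauli (n : ℕ) : Type := Fin n → ZMod 2 × ZMod 2

namespace Pauli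

/-- The symplectic form encoding commutation: `0` iff the operators commute. -/
def sform {n : ℕ} (a b : Pauli n) : ZMod 2 :=
  ∑ i, ((a i).1 * (b i).2 + (a i).2 * (b i).1)

/-- Two Pauli operators commute. -/
def PComm {n : ℕ} (a b : Pauli n) : Prop := sform a b = 0

/-- The weight of a Pauli operator: number of qubits on which it acts non-trivially. -/
def weight {n : ℕ} (a : Pauli n) : ℕ :=
  (Finset.univ.filter fun i => a i ≠ 0).card

/-- `(a,b)` is a conjugal pair in relation to the set `X`: `a` and `b` anti-commute,
and each commutes with every member of `X` other than its partner. -/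
def ConjugalPair {n : ℕ} (a b : Pauli n) (X : Set (Pauli n)) : Prop :=
  ¬ PComm a b ∧ (∀ x ∈ X, x ≠ b → PComm a x) ∧ (∀ x ∈ X, x ≠ a → PComm b x)

/-- `e` is an undetectable error with respect to `S` acting on `l`:
it commutes with all of `S` and anti-commutes with `l`. -/
def UndetError {n : ℕ} (S : Set (Pauli n)) (l e : Pauli n) : Prop :=
  (∀ s ∈ S, PComm e s) ∧ ¬ PComm e l

/-- `ω S l`: minimum weight of an undetectable error w.r.t. `S` acting on `l`. -/
noncomputable def ω {n : ℕ} (S : Set (Pauli n)) (l : Pauli n) : ℕ :=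
  sInf (weight '' {e | UndetError S l e})

/-- Single-qubit Pauli X on qubit `k`. -/
def Xk {n : ℕ} (k : Fin n) : Pauli n := fun i => if i = k then (1, 0) else 0

/-- Single-qubit Pauli Z on qubit `k`. -/
def Zk {n : ℕ} (k : Fin n) : Pauli n := fun i => if i = k then (0, 1) else 0

/-- `Pk k false = X_k`, `Pk k true = Z_k`. -/
def Pk {n : ℕ} (k : Fin n) (p : Bool) : Pauli n := if p then Zk k else Xk k

/-- A finite set of Pauli operators is independent if no member is a product of the others. -/
def IndepSet {n : ℕ} (T : Finset (Pauli n)) : Prop :=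
  ∀ t ∈ T, t ∉ AddSubgroup.closure ((T.erase t : Finset (Pauli n)) : Set (Pauli n))

/-- `O` is an unimprovable set with respect to `S`. -/
def Unimprovable {n : ℕ} (S : Set (Pauli n)) (O : Finset (Pauli n)) : Prop :=
  ∀ X ⊆ O, ∀ h : X.Nonempty, ω S (∑ x ∈ X, x) = X.inf' h (fun x => ω S x)

/-- The unimprovable set `O` extends to `Q` (with respect to `S`). -/
def ExtendsTo {n : ℕ} (S : Set (Pauli n)) (O Q : Finset (Pauli n)) : Prop :=
  ∀ R ⊆ O ∪ Q, ∀ h : (R ∩ O).Nonempty,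
    ω S (∑ x ∈ R, x) ≤ (R ∩ O).inf' h (fun x => ω S x)

end Pauli

namespace Pauli

variable {n : ℕ}

lemma zmod2_cases : ∀ x : ZMod 2, x = 0 ∨ x = 1 := by decide
lemma zmod2_ne (x : ZMod 2) (h : x ≠ 0) : x = 1 := by
  rcases zmod2_cases x with h' | h' <;> simp_all
lemma zmod2_one_one : (1 : ZMod 2) + 1 = 0 := by decide

lemma sform_comm (a b : Pauli n) : sform a b = sform b a := by
  unfold sform; apply Finset.sum_congr rfl; intros; ring

lemma sform_add_left (a b c : Pauli n) : sform (a + b) c = sform a c + sform b c := by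
  unfold sform
  rw [← Finset.sum_add_distrib]
  apply Finset.sum_congr rfl; intros; simp [Prod.fst_add, Prod.snd_add]; ring

lemma sform_add_right (a b c : Pauli n) : sform a (b + c) = sform a b + sform a c := by
  rw [sform_comm, sform_add_left, sform_comm b a, sform_comm c a]

lemma sform_self (a : Pauli n) : sform a a = 0 := by
  unfold sform
  apply Finset.sum_eq_zero; intros i _
  have : ∀ x y : ZMod 2, x * y + y * x = 0 := by decide
  exact this _ _

lemma sform_zero_left (a : Pauli n) : sform 0 a = 0 := by
  unfold sform; apply Finset.sum_eq_zero; intros; simp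

lemma sform_zero_right (a : Pauli n) : sform a 0 = 0 := by
  rw [sform_comm, sform_zero_left]

lemma pauli_add_self (a : Pauli n) : a + a = 0 := by
  funext i
  have : ∀ x : ZMod 2 × ZMod 2, x + x = 0 := by decide
  exact this (a i)

lemma pauli_neg (a : Pauli n) : -a = a :=
  neg_eq_of_add_eq_zero_left (pauli_add_self a)

lemma pauli_cancel (a b : Pauli n) : (a + b) + b = a := by
  rw [add_assoc, pauli_add_self, add_zero]

/-- components of a list of pairs -/
def comps (P : List (Pauli n × Pauli n)) : Set (Pauli n) :=
  {x | ∃ p ∈ P, x = p.1 ∨ x = p.2}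

def genSet (S : List (Pauli n)) (P : List (Pauli n × Pauli n)) : Set (Pauli n) :=
  {x | x ∈ S} ∪ comps P

/-- cross-pair commutation relation -/
def R {n : ℕ} (p q : Pauli n × Pauli n) : Prop :=
  sform p.1 q.1 = 0 ∧ sform p.1 q.2 = 0 ∧ sform p.2 q.1 = 0 ∧ sform p.2 q.2 = 0

lemma R_symm : Symmetric (R (n := n)) := by
  rintro p q ⟨h1, h2, h3, h4⟩
  exact ⟨by rw [sform_comm]; exact h1, by rw [sform_comm]; exact h3,
    by rw [sform_comm]; exact h2, by rw [sform_comm]; exact h4⟩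

def Good (S : List (Pauli n)) (P : List (Pauli n × Pauli n)) : Prop :=
  (∀ s ∈ S, ∀ t ∈ S, sform s t = 0) ∧
  (∀ s ∈ S, ∀ p ∈ P, sform s p.1 = 0 ∧ sform s p.2 = 0) ∧
  (∀ p ∈ P, sform p.1 p.2 = 1) ∧
  List.Pairwise R P

def adj (o : Pauli n) (p : Pauli n × Pauli n) : Pauli n :=
  o + (if sform o p.2 = 1 then p.1 else 0) + (if sform o p.1 = 1 then p.2 else 0)

def reduce (o : Pauli n) : List (Pauli n × Pauli n) → Pauli n
  | [] => o
  | p :: P => reduce (adj o p) P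

lemma sform_adj_fst (o : Pauli n) (p : Pauli n × Pauli n) (h : sform p.1 p.2 = 1) :
    sform (adj o p) p.1 = 0 := by
  unfold adj
  rw [sform_add_left, sform_add_left]
  have hc : sform p.2 p.1 = 1 := by rw [sform_comm]; exact h
  rcases zmod2_cases (sform o p.1) with h1 | h1 <;>
  rcases zmod2_cases (sform o p.2) with h2 | h2
  · rw [h1, h2, if_neg (by decide), if_neg (by decide), sform_zero_left]; decide
  · rw [h1, h2, if_pos rfl, if_neg (by decide), sform_self, sform_zero_left]; decide
  · rw [h1, h2, if_neg (by decide), if_pos rfl, sform_zero_left, hc]; decide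
  · rw [h1, h2, if_pos rfl, if_pos rfl, sform_self, hc]; decide

lemma sform_adj_snd (o : Pauli n) (p : Pauli n × Pauli n) (h : sform p.1 p.2 = 1) :
    sform (adj o p) p.2 = 0 := by
  unfold adj
  rw [sform_add_left, sform_add_left]
  rcases zmod2_cases (sform o p.1) with h1 | h1 <;>
  rcases zmod2_cases (sform o p.2) with h2 | h2
  · rw [h1, h2, if_neg (by decide), if_neg (by decide), sform_zero_left]; decide
  · rw [h1, h2, if_pos rfl, if_neg (by decide), h, sform_zero_left]; decide
  · rw [h1, h2, if_neg (by decide), if_pos rfl, sform_zero_left, sform_self]; decide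
  · rw [h1, h2, if_pos rfl, if_pos rfl, h, sform_self]; decide

lemma sform_closure_zero {T : Set (Pauli n)} {y : Pauli n} (h : ∀ x ∈ T, sform x y = 0) :
    ∀ v ∈ AddSubgroup.closure T, sform v y = 0 := by
  intro v hv
  induction hv using AddSubgroup.closure_induction with
  | mem x hx => exact h x hx
  | zero => exact sform_zero_left y
  | add x z _ _ hx hz => rw [sform_add_left, hx, hz, add_zero]
  | neg x _ hx => rw [pauli_neg]; exact hx

lemma adj_add_mem (o : Pauli n) (p : Pauli n × Pauli n) {T : Set (Pauli n)}
    (h1 : p.1 ∈ T) (h2 : p.2 ∈ T) : adj o p + o ∈ AddSubgroup.closure T := by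
  have : adj o p + o =
      (if sform o p.2 = 1 then p.1 else 0) + (if sform o p.1 = 1 then p.2 else 0) := by
    unfold adj
    have key : ∀ x y z : Pauli n, x + y + z + x = y + z + (x + x) := by intros; abel
    rw [key, pauli_add_self, add_zero]
  rw [this]
  apply AddSubgroup.add_mem
  · split
    · exact AddSubgroup.subset_closure h1
    · exact AddSubgroup.zero_mem _
  · split
    · exact AddSubgroup.subset_closure h2
    · exact AddSubgroup.zero_mem _

lemma reduce_add_mem (o : Pauli n) (P : List (Pauli n × Pauli n)) :
    reduce o P + o ∈ AddSubgroup.closure (comps P) := by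
  induction P generalizing o with
  | nil => simp [reduce, pauli_add_self, AddSubgroup.zero_mem]
  | cons p P ih =>
    have hsub : AddSubgroup.closure (comps P) ≤ AddSubgroup.closure (comps (p :: P)) := by
      apply AddSubgroup.closure_mono
      intro x ⟨q, hq, hx⟩
      exact ⟨q, List.mem_cons_of_mem _ hq, hx⟩
    have h1 : reduce (adj o p) P + adj o p ∈ AddSubgroup.closure (comps (p :: P)) :=
      hsub (ih (adj o p))
    have h2 : adj o p + o ∈ AddSubgroup.closure (comps (p :: P)) :=
      adj_add_mem o p ⟨p, List.mem_cons_self, Or.inl rfl⟩ ⟨p, List.mem_cons_self, Or.inr rfl⟩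
    have h3 := AddSubgroup.add_mem _ h1 h2
    have : reduce (adj o p) P + adj o p + (adj o p + o) = reduce (adj o p) P + o := by
      rw [add_assoc, ← add_assoc (adj o p), pauli_add_self, zero_add]
    rw [this] at h3
    exact h3

lemma reduce_comm (o : Pauli n) (P : List (Pauli n × Pauli n))
    (hpair : ∀ p ∈ P, sform p.1 p.2 = 1) (hpw : List.Pairwise R P) :
    ∀ p ∈ P, sform (reduce o P) p.1 = 0 ∧ sform (reduce o P) p.2 = 0 := by
  induction P generalizing o with
  | nil => intro p hp; simp at hp
  | cons q P ih =>
    intro p hp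
    rcases List.mem_cons.mp hp with rfl | hp'
    · -- p is the head; after adj, o commutes with p, and reduce over P preserves this
      have hq := hpair p List.mem_cons_self
      have ha1 := sform_adj_fst o p hq
      have ha2 := sform_adj_snd o p hq
      have hw : reduce (adj o p) P + adj o p ∈ AddSubgroup.closure (comps P) :=
        reduce_add_mem (adj o p) P
      have hcomm1 : ∀ x ∈ comps P, sform x p.1 = 0 := by
        rintro x ⟨r, hr, hx⟩
        have := (List.pairwise_cons.mp hpw).1 r hr
        rcases hx with rfl | rfl
        · rw [sform_comm]; exact this.1
        · rw [sform_comm]; exact this.2.1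
      have hcomm2 : ∀ x ∈ comps P, sform x p.2 = 0 := by
        rintro x ⟨r, hr, hx⟩
        have := (List.pairwise_cons.mp hpw).1 r hr
        rcases hx with rfl | rfl
        · rw [sform_comm]; exact this.2.2.1
        · rw [sform_comm]; exact this.2.2.2
      have key : reduce o (p :: P) = (reduce (adj o p) P + adj o p) + adj o p := by
        rw [pauli_cancel]; rfl
      constructor
      · rw [key, sform_add_left, sform_closure_zero hcomm1 _ hw, ha1, add_zero]
      · rw [key, sform_add_left, sform_closure_zero hcomm2 _ hw, ha2, add_zero]
    · have := ih (adj o q) (fun r hr => hpair r (List.mem_cons_of_mem _ hr))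
        (List.pairwise_cons.mp hpw).2 p hp'
      exact this



lemma closure_union_singleton_le {T : Set (Pauli n)} {a b : Pauli n}
    (h : a + b ∈ AddSubgroup.closure T) :
    AddSubgroup.closure (T ∪ {a}) ≤ AddSubgroup.closure (T ∪ {b}) := by
  rw [AddSubgroup.closure_le]
  rintro x hx
  rcases hx with hx | hx
  · exact AddSubgroup.subset_closure (Or.inl hx)
  · rw [Set.mem_singleton_iff] at hx
    subst hx
    have h1 : x + b ∈ AddSubgroup.closure (T ∪ {b}) :=
      AddSubgroup.closure_mono Set.subset_union_left h
    have h2 : b ∈ AddSubgroup.closure (T ∪ {b}) :=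
      AddSubgroup.subset_closure (Or.inr rfl)
    have := AddSubgroup.add_mem _ h1 h2
    rwa [pauli_cancel] at this

lemma closure_swap {T : Set (Pauli n)} {a b : Pauli n}
    (h : a + b ∈ AddSubgroup.closure T) :
    AddSubgroup.closure (T ∪ {a}) = AddSubgroup.closure (T ∪ {b}) := by
  apply le_antisymm (closure_union_singleton_le h)
  exact closure_union_singleton_le (by rwa [add_comm])

lemma step (S : List (Pauli n)) (P : List (Pauli n × Pauli n)) (o : Pauli n) (hG : Good S P) :
    ∃ S' P', Good S' P' ∧
      AddSubgroup.closure (genSet S' P') = AddSubgroup.closure (genSet S P ∪ {o}) := by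
  obtain ⟨hSS, hSP, hpair, hpw⟩ := hG
  set o' := reduce o P with ho'
  have hF1 : ∀ p ∈ P, sform o' p.1 = 0 ∧ sform o' p.2 = 0 := reduce_comm o P hpair hpw
  have hmem : o' + o ∈ AddSubgroup.closure (genSet S P) :=
    AddSubgroup.closure_mono Set.subset_union_right (reduce_add_mem o P)
  have hswap : AddSubgroup.closure (genSet S P ∪ {o'}) =
      AddSubgroup.closure (genSet S P ∪ {o}) := closure_swap hmem
  by_cases hc : ∀ s ∈ S, sform o' s = 0
  · refine ⟨o' :: S, P, ⟨?_, ?_, hpair, hpw⟩, ?_⟩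
    · intro u hu t ht
      rcases List.mem_cons.mp hu with rfl | hu <;> rcases List.mem_cons.mp ht with rfl | ht
      · exact sform_self _
      · exact hc t ht
      · rw [sform_comm]; exact hc _ hu
      · exact hSS u hu t ht
    · intro u hu p hp
      rcases List.mem_cons.mp hu with rfl | hu
      · exact hF1 p hp
      · exact hSP u hu p hp
    · have hgs : genSet (o' :: S) P = genSet S P ∪ {o'} := by
        ext x; simp only [genSet, Set.mem_union, Set.mem_setOf_eq, List.mem_cons,
          Set.mem_singleton_iff]; tauto
      rw [hgs]; exact hswap
  · push_neg at hc
    obtain ⟨s, hsS, hs0⟩ := hc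
    have hs1 : sform o' s = 1 := zmod2_ne _ hs0
    set f : Pauli n → Pauli n := fun t => if sform o' t = 0 then t else t + s with hf
    have hfs : ∀ t ∈ S, sform (f t) s = 0 := by
      intro t ht
      simp only [hf]
      split
      · exact hSS t ht s hsS
      · rw [sform_add_left, hSS t ht s hsS, sform_self, add_zero]
    have hfo : ∀ t ∈ S, sform (f t) o' = 0 := by
      intro t ht
      simp only [hf]
      split
      · next h0 => rw [sform_comm]; exact h0
      · next h0 =>
        have ht1 : sform t o' = 1 := by
          rw [sform_comm]; exact zmod2_ne _ h0
        have hso : sform s o' = 1 := by rw [sform_comm]; exact hs1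
        rw [sform_add_left, ht1, hso]; decide
    have hf_pair : ∀ t ∈ S, ∀ p ∈ P, sform (f t) p.1 = 0 ∧ sform (f t) p.2 = 0 := by
      intro t ht p hp
      simp only [hf]
      split
      · exact hSP t ht p hp
      · constructor
        · rw [sform_add_left, (hSP t ht p hp).1, (hSP s hsS p hp).1, add_zero]
        · rw [sform_add_left, (hSP t ht p hp).2, (hSP s hsS p hp).2, add_zero]
    have hff : ∀ t ∈ S, ∀ t' ∈ S, sform (f t) (f t') = 0 := by
      intro t ht t' ht'
      simp only [hf]
      split <;> split <;>
        simp [sform_add_left, sform_add_right, hSS t ht t' ht', hSS t ht s hsS,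
          hSS s hsS t' ht', hSS s hsS s hsS]
    refine ⟨S.map f, (s, o') :: P, ⟨?_, ?_, ?_, ?_⟩, ?_⟩
    · intro u hu v hv
      obtain ⟨t, ht, rfl⟩ := List.mem_map.mp hu
      obtain ⟨t', ht', rfl⟩ := List.mem_map.mp hv
      exact hff t ht t' ht'
    · intro u hu p hp
      obtain ⟨t, ht, rfl⟩ := List.mem_map.mp hu
      rcases List.mem_cons.mp hp with rfl | hp
      · exact ⟨hfs t ht, hfo t ht⟩
      · exact hf_pair t ht p hp
    · intro p hp
      rcases List.mem_cons.mp hp with rfl | hp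
      · show sform s o' = 1
        rw [sform_comm]; exact hs1
      · exact hpair p hp
    · refine List.pairwise_cons.mpr ⟨?_, hpw⟩
      intro q hq
      exact ⟨(hSP s hsS q hq).1, (hSP s hsS q hq).2, (hF1 q hq).1, (hF1 q hq).2⟩
    · rw [← hswap]
      apply le_antisymm
      · rw [AddSubgroup.closure_le]
        rintro x (hx | hx)
        · obtain ⟨t, ht, rfl⟩ := List.mem_map.mp (by simpa using hx)
          simp only [hf]
          split
          · exact AddSubgroup.subset_closure (Or.inl (Or.inl ht))
          · exact AddSubgroup.add_mem _
              (AddSubgroup.subset_closure (Or.inl (Or.inl ht)))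
              (AddSubgroup.subset_closure (Or.inl (Or.inl hsS)))
        · obtain ⟨q, hq, hx⟩ := hx
          rcases List.mem_cons.mp hq with rfl | hq
          · rcases hx with rfl | rfl
            · exact AddSubgroup.subset_closure (Or.inl (Or.inl hsS))
            · exact AddSubgroup.subset_closure (Or.inr rfl)
          · exact AddSubgroup.subset_closure (Or.inl (Or.inr ⟨q, hq, hx⟩))
      · rw [AddSubgroup.closure_le]
        have hsC : s ∈ genSet (S.map f) ((s, o') :: P) :=
          Or.inr ⟨(s, o'), List.mem_cons_self, Or.inl rfl⟩
        rintro x ((hx | hx) | rfl)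
        · -- x ∈ S
          by_cases h0 : sform o' x = 0
          · apply AddSubgroup.subset_closure
            refine Or.inl ?_
            simp only [Set.mem_setOf_eq, List.mem_map]
            exact ⟨x, hx, by simp [hf, h0]⟩
          · have hfx : f x = x + s := by simp [hf, h0]
            have h1 : f x ∈ genSet (S.map f) ((s, o') :: P) := by
              refine Or.inl ?_
              simp only [Set.mem_setOf_eq, List.mem_map]
              exact ⟨x, hx, rfl⟩
            have := AddSubgroup.add_mem _ (AddSubgroup.subset_closure h1)
              (AddSubgroup.subset_closure hsC)
            rwa [hfx, pauli_cancel] at this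
        · obtain ⟨q, hq, h⟩ := hx
          exact AddSubgroup.subset_closure (Or.inr ⟨q, List.mem_cons_of_mem _ hq, h⟩)
        · exact AddSubgroup.subset_closure (Or.inr ⟨(s, o'), List.mem_cons_self, Or.inr rfl⟩)

lemma main (O : List (Pauli n)) :
    ∃ S P, Good S P ∧
      AddSubgroup.closure (genSet S P) = AddSubgroup.closure {x | x ∈ O} := by
  induction O with
  | nil =>
    refine ⟨[], [], ⟨?_, ?_, ?_, List.Pairwise.nil⟩, ?_⟩
    · intro s hs; simp at hs
    · intro s hs; simp at hs
    · intro p hp; simp at hp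
    · congr 1
      ext x
      simp [genSet, comps]
  | cons o rest ih =>
    obtain ⟨S, P, hG, hcl⟩ := ih
    obtain ⟨S', P', hG', hcl'⟩ := step S P o hG
    refine ⟨S', P', hG', ?_⟩
    rw [hcl']
    have hset : {x : Pauli n | x ∈ o :: rest} = {x : Pauli n | x ∈ rest} ∪ {o} := by
      ext x; simp [or_comm]
    rw [hset, AddSubgroup.closure_union, AddSubgroup.closure_union, hcl]


end Pauli

/-- proof -/
theorem stmt16 {n : ℕ} (O : List (Pauli n)) :
    ∃ (S : List (Pauli n)) (G : Set (Pauli n)),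
      (∀ s ∈ S, ∀ s' ∈ S, Pauli.PComm s s') ∧
      (∀ s ∈ S, ∀ g ∈ G, Pauli.PComm s g) ∧
      (∀ g ∈ G, ∃ g' ∈ G, Pauli.ConjugalPair g g' ({x | x ∈ S} ∪ G)) ∧
      AddSubgroup.closure ({x | x ∈ S} ∪ G) = AddSubgroup.closure {x | x ∈ O} := by
  obtain ⟨S, P, ⟨hSS, hSP, hpair, hpw⟩, hcl⟩ := Pauli.main O
  have hone : (1 : ZMod 2) ≠ 0 := by decide
  have hforall : ∀ p ∈ P, ∀ q ∈ P, p ≠ q → Pauli.R p q :=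
    fun p hp q hq hne => by
      haveI : Std.Symm (Pauli.R (n := n)) := ⟨fun a b h => Pauli.R_symm h⟩
      exact List.Pairwise.forall hpw hp hq hne
  have hcp : ∀ p ∈ P, ∀ x ∈ ({y | y ∈ S} ∪ Pauli.comps P),
      (x ≠ p.2 → Pauli.PComm p.1 x) ∧ (x ≠ p.1 → Pauli.PComm p.2 x) := by
    intro p hp x hx
    rcases hx with hx | ⟨q, hq, hxq⟩
    · constructor <;> intro _
      · show Pauli.sform p.1 x = 0
        rw [Pauli.sform_comm]; exact (hSP x hx p hp).1
      · show Pauli.sform p.2 x = 0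
        rw [Pauli.sform_comm]; exact (hSP x hx p hp).2
    · by_cases hqp : q = p
      · subst hqp
        rcases hxq with rfl | rfl
        · exact ⟨fun _ => Pauli.sform_self _, fun hne => absurd rfl hne⟩
        · exact ⟨fun hne => absurd rfl hne, fun _ => Pauli.sform_self _⟩
      · have hR := hforall p hp q hq (fun h => hqp h.symm)
        rcases hxq with rfl | rfl
        · exact ⟨fun _ => hR.1, fun _ => hR.2.2.1⟩
        · exact ⟨fun _ => hR.2.1, fun _ => hR.2.2.2⟩
  refine ⟨S, Pauli.comps P, hSS, ?_, ?_, hcl⟩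
  · rintro s hs g ⟨q, hq, (rfl | rfl)⟩
    · exact (hSP s hs q hq).1
    · exact (hSP s hs q hq).2
  · rintro g ⟨p, hp, (rfl | rfl)⟩
    · refine ⟨p.2, ⟨p, hp, Or.inr rfl⟩, ?_, ?_, ?_⟩
      · intro h
        rw [Pauli.PComm, hpair p hp] at h
        exact hone h
      · exact fun x hx hne => (hcp p hp x hx).1 hne
      · exact fun x hx hne => (hcp p hp x hx).2 hne
    · refine ⟨p.1, ⟨p, hp, Or.inl rfl⟩, ?_, ?_, ?_⟩
      · intro h
        rw [Pauli.PComm, Pauli.sform_comm, hpair p hp] at h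
        exact hone h
      · exact fun x hx hne => (hcp p hp x hx).2 hne
      · exact fun x hx hne => (hcp p hp x hx).1 hne
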